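/- If p is prime and N is a power of p, then there exists a family of N vectors in (Z/pZ)^(p·log_p(N)) such that for any two distinct vectors v, w in the family and every s in Z/pZ, there exists a coordinate i with v_i - w_i = s (mod p). -/
import Mathlib


/-- If `p` is prime and `N = p ^ m` is a power of `p`, there is a family of `N` vectors
in `(ZMod p)^(p * m)` (note `m = log_p N`) such that any two distinct vectors `v, w`
and every `s : ZMod p` admit a coordinate `i` with `v i - w i = s`. -/
theorem stmt0 (p m : ℕ) (hp : p.Prime) :
    ∃ F : Finset (Fin (p * m) → ZMod p),
      F.card = p ^ m ∧
      ∀ v ∈ F, ∀ w ∈ F, v ≠ w → ∀ s : ZMod p, ∃ i, v i - w i = s := by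
  haveI : Fact p.Prime := ⟨hp⟩
  haveI : NeZero p := ⟨hp.ne_zero⟩
  set e : Fin p × Fin m ≃ Fin (p * m) := finProdFinEquiv
  set f : (Fin m → ZMod p) → (Fin (p * m) → ZMod p) :=
    fun x i => (((e.symm i).1 : ℕ) : ZMod p) * x (e.symm i).2 with hf
  have hinj : Function.Injective f := by
    intro x y hxy
    funext j
    have one_lt : 1 < p := hp.one_lt
    have h := congrFun hxy (e (⟨1, one_lt⟩, j))
    simp only [hf, Equiv.symm_apply_apply] at h
    simpa using h
  refine ⟨Finset.image f Finset.univ, ?_, ?_⟩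
  · rw [Finset.card_image_of_injective _ hinj, Finset.card_univ]
    simp [ZMod.card]
  · rintro v hv w hw hvw s
    simp only [Finset.mem_image, Finset.mem_univ, true_and] at hv hw
    obtain ⟨x, rfl⟩ := hv
    obtain ⟨y, rfl⟩ := hw
    have hxy : x ≠ y := fun h => hvw (by rw [h])
    obtain ⟨j, hj⟩ := Function.ne_iff.mp hxy
    set d : ZMod p := x j - y j with hd
    have hd0 : d ≠ 0 := sub_ne_zero.mpr hj
    set k : ZMod p := s * d⁻¹ with hk
    refine ⟨e (⟨k.val, k.val_lt⟩, j), ?_⟩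
    simp only [hf, Equiv.symm_apply_apply]
    have hkv : ((k.val : ℕ) : ZMod p) = k := ZMod.natCast_val k |>.trans (ZMod.cast_id _ _)
    rw [hkv, ← mul_sub, ← hd, hk, mul_assoc, inv_mul_cancel₀ hd0, mul_one]
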